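/- Let A ⊆ B ⊆ C be measurable sets of finite positive measure in (M, m) and let X be a fundamental domain of finite positive measure for a measure-preserving Γ-action, such that m(A ∩ γ·X) ≠ 0 implies γ·X ⊆ B and m(B ∩ γ·X) ≠ 0 implies γ·X ⊆ C. If a sequence of such triples (A_n, B_n, C_n) satisfies lim m(A_n)/m(C_n) = 1, then lim_{n→∞} N_b(X; B_n)/m(B_n) = 0, where N_b(X; B) is the number of γ with γ·X meeting both B and its complement in positive measure. -/

import Mathlib

open MeasureTheory Set Pointwise ENNReal Filter

/-- The number of translates `γ • X` meeting both `D` and its complement in positive measure. -/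
noncomputable def boundaryCount {M : Type*} [MeasurableSpace M] (Γ : Type*) [Group Γ]
    [MulAction Γ M] (μ : Measure M) (X D : Set M) : ℕ∞ :=
  {γ : Γ | μ ((γ • X) ∩ D) ≠ 0 ∧ μ ((γ • X) ∩ Dᶜ) ≠ 0}.encard

/-- For sandwiched sequences `A n ⊆ B n ⊆ C n` with `μ (A n)/μ (C n) → 1` and the
translate conditions, the relative boundary count of `B n` tends to zero. -/
theorem boundaryCount_div_measure_tendsto_zero
    {M : Type*} [MeasurableSpace M]
    {Γ : Type*} [Group Γ] [Countable Γ] [MulAction Γ M]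
    (hmeasΓ : ∀ γ : Γ, Measurable fun x : M => γ • x)
    (μ : Measure M) [SigmaFinite μ] [SMulInvariantMeasure Γ M μ]
    (X : Set M) (hXmeas : MeasurableSet X) (hX : IsFundamentalDomain Γ X μ)
    (hX0 : 0 < μ X) (hXfin : μ X ≠ ⊤)
    (A B C : ℕ → Set M)
    (hmeasA : ∀ n, MeasurableSet (A n)) (hmeasB : ∀ n, MeasurableSet (B n))
    (hmeasC : ∀ n, MeasurableSet (C n))
    (hAB : ∀ n, A n ⊆ B n) (hBC : ∀ n, B n ⊆ C n)
    (hA0 : ∀ n, 0 < μ (A n)) (hCfin : ∀ n, μ (C n) ≠ ⊤)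
    (hΓA : ∀ n, ∀ γ : Γ, μ (A n ∩ γ • X) ≠ 0 → γ • X ⊆ B n)
    (hΓB : ∀ n, ∀ γ : Γ, μ (B n ∩ γ • X) ≠ 0 → γ • X ⊆ C n)
    (hlim : Tendsto (fun n => μ (A n) / μ (C n)) atTop (nhds 1)) :
    Tendsto (fun n => (boundaryCount Γ μ X (B n) : ℝ≥0∞) / μ (B n)) atTop (nhds 0) := by
  letI : MeasurableSpace Γ := ⊤
  haveI : MeasurableSMul Γ M :=
    { measurable_const_smul := fun γ => hmeasΓ γ, measurable_smul_const := fun _ => measurable_from_top }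
  -- measures of A, C are positive and finite
  have hC0 : ∀ n, 0 < μ (C n) := fun n =>
    lt_of_lt_of_le (hA0 n) (measure_mono ((hAB n).trans (hBC n)))
  have hAfin : ∀ n, μ (A n) ≠ ⊤ := fun n =>
    ne_top_of_le_ne_top (hCfin n) (measure_mono ((hAB n).trans (hBC n)))
  -- Key inequality: N_b(B n) * μ X ≤ μ (C n) - μ (A n)
  have key : ∀ n, (boundaryCount Γ μ X (B n) : ℝ≥0∞) * μ X ≤ μ (C n) - μ (A n) := by
    intro n
    set S : Set Γ := {γ : Γ | μ ((γ • X) ∩ B n) ≠ 0 ∧ μ ((γ • X) ∩ (B n)ᶜ) ≠ 0} with hS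
    have hsub : ∀ γ : S, μ X ≤ μ ((C n \ A n) ∩ (γ : Γ) • X) := by
      rintro ⟨γ, hγ1, hγ2⟩
      have hC : γ • X ⊆ C n := hΓB n γ (by rwa [inter_comm])
      have hA : μ (A n ∩ γ • X) = 0 := by
        by_contra h
        have hBX : γ • X ⊆ B n := hΓA n γ h
        refine hγ2 (measure_mono_null (fun x hx => ?_) (measure_empty (μ := μ)))
        exact absurd (hBX hx.1) hx.2
      have hcover : γ • X ⊆ ((C n \ A n) ∩ γ • X) ∪ (A n ∩ γ • X) := by
        intro x hx
        by_cases hxA : x ∈ A n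
        · exact Or.inr ⟨hxA, hx⟩
        · exact Or.inl ⟨⟨hC hx, hxA⟩, hx⟩
      calc μ X = μ (γ • X) := (measure_smul (μ := μ) γ X).symm
        _ ≤ μ (((C n \ A n) ∩ γ • X) ∪ (A n ∩ γ • X)) := measure_mono hcover
        _ ≤ μ ((C n \ A n) ∩ γ • X) + μ (A n ∩ γ • X) := measure_union_le _ _
        _ = μ ((C n \ A n) ∩ γ • X) := by rw [hA, add_zero]
    calc (boundaryCount Γ μ X (B n) : ℝ≥0∞) * μ X
        = (S.encard : ℝ≥0∞) * μ X := rfl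
      _ = ∑' _ : S, μ X := (ENNReal.tsum_set_const _ _).symm
      _ ≤ ∑' γ : S, μ ((C n \ A n) ∩ (γ : Γ) • X) := ENNReal.tsum_le_tsum hsub
      _ ≤ ∑' γ : Γ, μ ((C n \ A n) ∩ γ • X) :=
          ENNReal.tsum_comp_le_tsum_of_injective Subtype.val_injective
            (fun γ => μ ((C n \ A n) ∩ γ • X))
      _ = μ (C n \ A n) := (hX.measure_eq_tsum' _).symm
      _ = μ (C n) - μ (A n) := measure_diff ((hAB n).trans (hBC n))
          (hmeasA n).nullMeasurableSet (hAfin n)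
  -- bound the quotient
  have hbound : ∀ n, (boundaryCount Γ μ X (B n) : ℝ≥0∞) / μ (B n)
      ≤ (μ (C n) / μ (A n) - 1) * (μ X)⁻¹ := by
    intro n
    have h1 : (boundaryCount Γ μ X (B n) : ℝ≥0∞) ≤ (μ (C n) - μ (A n)) / μ X :=
      (ENNReal.le_div_iff_mul_le (Or.inl hX0.ne') (Or.inl hXfin)).2 (key n)
    calc (boundaryCount Γ μ X (B n) : ℝ≥0∞) / μ (B n)
        ≤ ((μ (C n) - μ (A n)) / μ X) / μ (A n) :=
          ENNReal.div_le_div h1 (measure_mono (hAB n))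
      _ = ((μ (C n) - μ (A n)) / μ (A n)) * (μ X)⁻¹ := by
          simp only [div_eq_mul_inv]; ring
      _ = (μ (C n) / μ (A n) - 1) * (μ X)⁻¹ := by
          rw [ENNReal.sub_div (fun _ _ => (hA0 n).ne'),
            ENNReal.div_self (hA0 n).ne' (hAfin n)]
  -- the bound tends to zero
  have hCA : Tendsto (fun n => μ (C n) / μ (A n)) atTop (nhds 1) := by
    have := hlim.inv
    simp only [inv_one] at this
    refine this.congr fun n => ?_
    rw [ENNReal.inv_div (Or.inl (hCfin n)) (Or.inl (hC0 n).ne')]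
  have hzero : Tendsto (fun n => (μ (C n) / μ (A n) - 1) * (μ X)⁻¹) atTop (nhds 0) := by
    have hsub : Tendsto (fun n => μ (C n) / μ (A n) - 1) atTop (nhds 0) := by
      have := ENNReal.Tendsto.sub hCA tendsto_const_nhds (b := 1) (Or.inr one_ne_top)
      simpa using this
    have := ENNReal.Tendsto.mul_const hsub (Or.inr (ENNReal.inv_ne_top.2 hX0.ne'))
    simpa using this
  exact tendsto_of_tendsto_of_tendsto_of_le_of_le tendsto_const_nhds hzero
    (fun n => zero_le) hbound
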